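/- Let G be a finite group, q the smallest prime divisor of |G|, and suppose that for every prime-power divisor n of the exponent of G, the number of elements g with g^n = 1 is at most q·n. Then for every prime p ≠ q dividing |G|, the Sylow p-subgroup of G is normal in G. -/

import Mathlib

open Pointwise

theorem stmt_12 (G : Type*) [Group G] [Finite G] (q : ℕ) (hq : q.Prime)
    (hqdvd : q ∣ Nat.card G)
    (hqmin : ∀ p : ℕ, p.Prime → p ∣ Nat.card G → q ≤ p)
    (hF : ∀ n : ℕ, IsPrimePow n → n ∣ Monoid.exponent G →
      Nat.card {g : G | g ^ n = 1} ≤ q * n) :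
    ∀ p : ℕ, p.Prime → p ≠ q → p ∣ Nat.card G →
      ∀ P : Sylow p G, (P : Subgroup G).Normal := by
  intro p hp hpq hpdvd P
  haveI : Fact p.Prime := ⟨hp⟩
  have hcardG : Nat.card G ≠ 0 := Nat.card_pos.ne'
  have hexp : Monoid.exponent G ≠ 0 := Monoid.exponent_ne_zero_of_finite
  have hqp : q < p := lt_of_le_of_ne (hqmin p hp hpdvd) (Ne.symm hpq)
  set a := (Nat.card G).factorization p with ha
  set b := (Monoid.exponent G).factorization p with hb
  have ha1 : 0 < a := hp.factorization_pos_of_dvd hcardG hpdvd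
  have hb1 : 0 < b := by
    obtain ⟨g, hg⟩ := exists_prime_orderOf_dvd_card' (G := G) p hpdvd
    have : p ∣ Monoid.exponent G := hg ▸ Monoid.order_dvd_exponent g
    exact hp.factorization_pos_of_dvd hexp this
  have hpb_dvd : p ^ b ∣ Monoid.exponent G := Nat.ordProj_dvd _ p
  have hSylcard : ∀ R : Sylow p G, Nat.card R = p ^ a := fun R => R.card_eq_multiplicity
  -- every element of a Sylow p-subgroup satisfies x ^ p ^ b = 1
  have hmem_pow : ∀ (R : Sylow p G) (x : G), x ∈ R → x ^ p ^ b = 1 := by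
    intro R x hx
    obtain ⟨k, hk⟩ := R.isPGroup' ⟨x, hx⟩
    have hxk : x ^ p ^ k = 1 := by
      exact_mod_cast congrArg (Subgroup.subtype R.toSubgroup) hk
    obtain ⟨c, hcle, hc⟩ := (Nat.dvd_prime_pow hp).mp (orderOf_dvd_of_pow_eq_one hxk)
    have hcb : c ≤ b := by
      have : p ^ c ∣ Monoid.exponent G := hc ▸ Monoid.order_dvd_exponent x
      exact (Nat.Prime.pow_dvd_iff_le_factorization hp hexp).mp this
    exact orderOf_dvd_iff_pow_eq_one.mp (hc ▸ pow_dvd_pow p hcb)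
  -- the hypothesis bound
  have hS : Nat.card {g : G | g ^ p ^ b = 1} ≤ q * p ^ b :=
    hF _ ⟨p, b, hp.prime, hb1, rfl⟩ hpb_dvd
  -- a ≤ b
  have hab : a ≤ b := by
    have hinj : Nat.card P ≤ Nat.card {g : G | g ^ p ^ b = 1} := by
      apply Nat.card_le_card_of_injective
        (fun x : P => (⟨(x : G), hmem_pow P x x.2⟩ : {g : G | g ^ p ^ b = 1}))
      intro x y hxy
      exact Subtype.ext (by simpa using congrArg Subtype.val hxy)
    have h1 : p ^ a ≤ q * p ^ b := by
      rw [← hSylcard P]; exact hinj.trans hS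
    have h2 : p ^ a < p ^ (b + 1) := by
      calc p ^ a ≤ q * p ^ b := h1
        _ < p * p ^ b := by
            exact Nat.mul_lt_mul_of_lt_of_le hqp le_rfl (pow_pos hp.pos b)
        _ = p ^ (b + 1) := by ring
    have := (pow_lt_pow_iff_right₀ hp.one_lt).mp h2
    omega
  -- b ≤ a, hence a = b
  have hba : b ≤ a := by
    obtain ⟨g, hg⟩ := hp.exists_orderOf_eq_pow_factorization_exponent (G := G)
    have : p ^ b ∣ Nat.card G := hg ▸ orderOf_dvd_natCard g
    exact (Nat.Prime.pow_dvd_iff_le_factorization hp hcardG).mp this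
  have haeb : a = b := le_antisymm hab hba
  -- there is an element of order p ^ a
  obtain ⟨g0, hg0⟩ : ∃ g : G, orderOf g = p ^ a := by
    obtain ⟨g, hg⟩ := hp.exists_orderOf_eq_pow_factorization_exponent (G := G)
    exact ⟨g, by rw [hg, haeb]⟩
  -- any subgroup generated by an element of order p ^ a equals the Sylow containing it
  have hzpow_eq : ∀ (y : G), orderOf y = p ^ a → ∀ R : Sylow p G,
      Subgroup.zpowers y ≤ R.toSubgroup → Subgroup.zpowers y = R.toSubgroup := by
    intro y hy R hle
    apply Subgroup.eq_of_le_of_card_ge hle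
    rw [hSylcard R, Nat.card_zpowers, hy]
  -- every Sylow contains an element of order p ^ a
  have hgen : ∀ R : Sylow p G, ∃ y : G, y ∈ R ∧ orderOf y = p ^ a := by
    intro R
    have hzp : IsPGroup p (Subgroup.zpowers g0) :=
      IsPGroup.of_card (by rw [Nat.card_zpowers, hg0])
    obtain ⟨Q, hQ⟩ := hzp.exists_le_sylow
    obtain ⟨x, hx⟩ := MulAction.exists_smul_eq G Q R
    refine ⟨MulAut.conj x g0, ?_, ?_⟩
    · have hg0Q : g0 ∈ Q := hQ (Subgroup.mem_zpowers g0)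
      have : MulAut.conj x g0 ∈ MulAut.conj x • Q.toSubgroup :=
        Subgroup.smul_mem_pointwise_smul _ _ _ hg0Q
      rwa [← Sylow.coe_subgroup_smul, hx] at this
    · have h := orderOf_injective (MulAut.conj x).toMonoidHom (MulAut.conj x).injective g0
      rw [hg0] at h
      exact h
  -- choose a generator for each Sylow
  choose gen hgenmem hgenord using hgen
  haveI : NeZero (p ^ a) := ⟨pow_ne_zero _ hp.pos.ne'⟩
  -- the counting injection
  have hcount : Nat.card (Sylow p G) * (p ^ a).totient ≤ q * p ^ b := by
    refine le_trans ?_ hS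
    rw [← ZMod.card_units_eq_totient (p ^ a), ← Nat.card_eq_fintype_card, ← Nat.card_prod]
    apply Nat.card_le_card_of_injective
      (fun Ru : Sylow p G × (ZMod (p ^ a))ˣ =>
        (⟨gen Ru.1 ^ ((Ru.2 : ZMod (p ^ a)).val), by
          have h1 : (gen Ru.1 ^ ((Ru.2 : ZMod (p ^ a)).val)) ^ p ^ b = 1 := by
            rw [← pow_mul, mul_comm, pow_mul]
            have : (gen Ru.1) ^ p ^ b = 1 :=
              hmem_pow Ru.1 (gen Ru.1) (hgenmem Ru.1)
            rw [this, one_pow]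
          exact h1⟩ : {g : G | g ^ p ^ b = 1}))
    rintro ⟨R, u⟩ ⟨R', u'⟩ hEq
    have hEq' : gen R ^ ((u : ZMod (p ^ a)).val) = gen R' ^ ((u' : ZMod (p ^ a)).val) :=
      congrArg Subtype.val hEq
    have hcop : (orderOf (gen R)).Coprime ((u : ZMod (p ^ a)).val) := by
      rw [hgenord R]; exact (ZMod.val_coe_unit_coprime u).symm
    have hyord : orderOf (gen R ^ ((u : ZMod (p ^ a)).val)) = p ^ a := by
      rw [hcop.orderOf_pow, hgenord R]
    have hyR : Subgroup.zpowers (gen R ^ ((u : ZMod (p ^ a)).val)) = R.toSubgroup := by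
      apply hzpow_eq _ hyord
      rw [Subgroup.zpowers_le]
      exact Subgroup.pow_mem _ (hgenmem R) _
    have hyR' : Subgroup.zpowers (gen R ^ ((u : ZMod (p ^ a)).val)) = R'.toSubgroup := by
      apply hzpow_eq _ hyord
      rw [Subgroup.zpowers_le, hEq']
      exact Subgroup.pow_mem _ (hgenmem R') _
    have hRR' : R = R' := Sylow.ext (hyR ▸ hyR')
    subst hRR'
    have huu' : (u : ZMod (p ^ a)).val = (u' : ZMod (p ^ a)).val := by
      have := pow_eq_pow_iff_modEq.mp hEq'
      rw [hgenord R] at this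
      exact this.eq_of_lt_of_lt (ZMod.val_lt _) (ZMod.val_lt _)
    exact Prod.ext rfl (Units.ext (ZMod.val_injective _ huu'))
  -- if P were not normal, there would be at least p + 1 Sylows
  by_contra hnN
  have hN1 : Nat.card (Sylow p G) ≠ 1 := by
    intro h1
    apply hnN
    rw [← Subgroup.normalizer_eq_top_iff]
    rw [eq_top_iff]
    intro x _
    refine Sylow.smul_eq_iff_mem_normalizer.mp ?_
    haveI : Subsingleton (Sylow p G) :=
      (Nat.card_eq_one_iff_unique.mp h1).1
    exact Subsingleton.elim _ _
  have hmod : Nat.card (Sylow p G) % p = 1 % p := card_sylow_modEq_one p G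
  have hNpos : 0 < Nat.card (Sylow p G) := Nat.card_pos
  have hNge : p + 1 ≤ Nat.card (Sylow p G) := by
    rcases Nat.lt_or_ge (Nat.card (Sylow p G)) (p + 1) with h | h
    · exfalso
      rw [Nat.one_mod_eq_one.mpr hp.one_lt.ne'] at hmod
      rcases Nat.lt_or_ge (Nat.card (Sylow p G)) p with h2 | h2
      · rw [Nat.mod_eq_of_lt h2] at hmod; omega
      · have : Nat.card (Sylow p G) = p := by omega
        rw [this, Nat.mod_self] at hmod; omega
    · exact h
  -- final arithmetic contradiction
  have htot : (p ^ a).totient = p ^ (a - 1) * (p - 1) :=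
    Nat.totient_prime_pow hp ha1
  have hfinal : (p + 1) * (p ^ (a - 1) * (p - 1)) ≤ q * p ^ b := by
    calc (p + 1) * (p ^ (a - 1) * (p - 1))
        ≤ Nat.card (Sylow p G) * (p ^ a).totient := by
          rw [htot]; exact Nat.mul_le_mul_right _ hNge
      _ ≤ q * p ^ b := hcount
  have hpa : p ^ b = p ^ (a - 1) * p := by
    rw [← haeb, ← pow_succ]
    congr 1
    omega
  rw [hpa] at hfinal
  have hq_le : q ≤ p - 1 := by omega
  have hfinal2 : (p + 1) * ((p - 1) * p ^ (a - 1)) ≤ p * ((p - 1) * p ^ (a - 1)) := by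
    calc (p + 1) * ((p - 1) * p ^ (a - 1))
        = (p + 1) * (p ^ (a - 1) * (p - 1)) := by ring
      _ ≤ q * (p ^ (a - 1) * p) := hfinal
      _ ≤ (p - 1) * (p ^ (a - 1) * p) := Nat.mul_le_mul_right _ hq_le
      _ = p * ((p - 1) * p ^ (a - 1)) := by ring
  have hpos : 0 < (p - 1) * p ^ (a - 1) := by
    have h2 := hp.two_le
    exact Nat.mul_pos (by omega) (pow_pos hp.pos _)
  have := Nat.le_of_mul_le_mul_right hfinal2 hpos
  omega
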